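/- arXiv:1305.1684 — 4 statements merged into one kernel-verified Lean document; each statement's English description precedes it below -/
import Mathlib

section
/- Let A be an additive category, and let B ⊆ C ⊆ A be full additive subcategories. Then there is a canonical equivalence of additive categories (A // B) // (C // B) ≃ A // C, where C // B is viewed as a full subcategory of A // B. -/
open CategoryTheory CategoryTheory.Limits

universe v u

/-- A morphism factors through an object satisfying `P`. -/
def FactorsThrough' {A : Type u} [Category.{v} A] (P : A → Prop) {X Y : A}
    (f : X ⟶ Y) : Prop :=
  ∃ (Z : A) (g : X ⟶ Z) (h : Z ⟶ Y), P Z ∧ f = g ≫ h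

/-- The hom relation defining the naive quotient `A // B` of an additive category by a
full additive subcategory `B` (objects satisfying `P`). -/
def naiveQuotRel {A : Type u} [Category.{v} A] [Preadditive A] (P : A → Prop) :
    HomRel A :=
  fun {_ _} f g => FactorsThrough' P (f - g)

/-- The hom relation on `A // B` defining `(A // B) // (C // B)`, where `C // B` is
viewed as the full subcategory of `A // B` on the objects of `C`: two morphisms of
`A // B` are identified iff they admit representatives in `A` whose difference factors
through an object of `C`. -/
def outerQuotRel {A : Type u} [Category.{v} A] [Preadditive A] (PB PC : A → Prop) :
    HomRel (CategoryTheory.Quotient (naiveQuotRel PB)) :=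
  fun {X Y} f g => ∃ f₀ g₀ : X.as ⟶ Y.as,
    (Quotient.functor (naiveQuotRel PB)).map f₀ = f ∧
    (Quotient.functor (naiveQuotRel PB)).map g₀ = g ∧
    FactorsThrough' PC (f₀ - g₀)

section
variable {A : Type u} [Category.{v} A] [Preadditive A]
variable (PB PC : A → Prop)

lemma relBC (hBC : ∀ Z, PB Z → PC Z) {X Y : A} {f g : X ⟶ Y}
    (h : naiveQuotRel PB f g) : naiveQuotRel PC f g := by
  obtain ⟨Z, u, v, hZ, hfg⟩ := h
  exact ⟨Z, u, v, hBC Z hZ, hfg⟩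

/-- The lifted functor `A // B ⥤ A // C`. -/
def midF (hBC : ∀ Z, PB Z → PC Z) :
    CategoryTheory.Quotient (naiveQuotRel PB) ⥤ CategoryTheory.Quotient (naiveQuotRel PC) :=
  CategoryTheory.Quotient.lift _ (Quotient.functor (naiveQuotRel PC))
    (fun _ _ _ _ h => CategoryTheory.Quotient.sound _ (relBC PB PC hBC h))

lemma midF_kills (hBC : ∀ Z, PB Z → PC Z) {X Y : CategoryTheory.Quotient (naiveQuotRel PB)}
    (f g : X ⟶ Y) (h : outerQuotRel PB PC f g) :
    (midF PB PC hBC).map f = (midF PB PC hBC).map g := by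
  obtain ⟨f₀, g₀, hf, hg, hfac⟩ := h
  have hF : Quotient.functor (naiveQuotRel PB) ⋙ midF PB PC hBC =
      Quotient.functor (naiveQuotRel PC) := CategoryTheory.Quotient.lift_spec _ _ _
  rw [← hf, ← hg]
  have e1 := Functor.congr_hom hF f₀
  have e2 := Functor.congr_hom hF g₀
  simp only [Functor.comp_map] at e1 e2
  rw [e1, e2]
  have : (Quotient.functor (naiveQuotRel PC)).map f₀ =
      (Quotient.functor (naiveQuotRel PC)).map g₀ := CategoryTheory.Quotient.sound _ hfac
  rw [this]

/-- `(A // B) // (C // B) ⥤ A // C`. -/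
def fwd (hBC : ∀ Z, PB Z → PC Z) :
    CategoryTheory.Quotient (outerQuotRel PB PC) ⥤ CategoryTheory.Quotient (naiveQuotRel PC) :=
  CategoryTheory.Quotient.lift _ (midF PB PC hBC) (fun _ _ _ _ h => midF_kills PB PC hBC _ _ h)

/-- `A // C ⥤ (A // B) // (C // B)`. -/
def bwd : CategoryTheory.Quotient (naiveQuotRel PC) ⥤
    CategoryTheory.Quotient (outerQuotRel PB PC) :=
  CategoryTheory.Quotient.lift _ (Quotient.functor (naiveQuotRel PB) ⋙ Quotient.functor (outerQuotRel PB PC))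
    (fun _ _ f g h => by
      apply CategoryTheory.Quotient.sound
      exact ⟨f, g, rfl, rfl, h⟩)

end

/-- Let `A` be an additive category and `B ⊆ C ⊆ A` full additive
subcategories.  Then there is a canonical equivalence `(A // B) // (C // B) ≃ A // C`,
canonical in that it is compatible with the quotient functors. -/
theorem stmt4 {A : Type u} [Category.{v} A] [Preadditive A] [HasBinaryBiproducts A]
    (PB PC : A → Prop) (hBC : ∀ Z, PB Z → PC Z)
    (hneB : ∃ Z, PB Z) (hbiB : ∀ Z W : A, PB Z → PB W → PB (Z ⊞ W))
    (hbiC : ∀ Z W : A, PC Z → PC W → PC (Z ⊞ W)) :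
    ∃ e : CategoryTheory.Quotient (outerQuotRel PB PC) ≌
        CategoryTheory.Quotient (naiveQuotRel PC),
      Nonempty (Quotient.functor (naiveQuotRel PB) ⋙
          Quotient.functor (outerQuotRel PB PC) ⋙ e.functor ≅
        Quotient.functor (naiveQuotRel PC)) := by
  have hmid : Quotient.functor (naiveQuotRel PB) ⋙ midF PB PC hBC =
      Quotient.functor (naiveQuotRel PC) := CategoryTheory.Quotient.lift_spec _ _ _
  have hfwd : Quotient.functor (outerQuotRel PB PC) ⋙ fwd PB PC hBC = midF PB PC hBC :=
    CategoryTheory.Quotient.lift_spec _ _ _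
  have hbwd : Quotient.functor (naiveQuotRel PC) ⋙ bwd PB PC =
      Quotient.functor (naiveQuotRel PB) ⋙ Quotient.functor (outerQuotRel PB PC) :=
    CategoryTheory.Quotient.lift_spec _ _ _
  have hcomp : Quotient.functor (naiveQuotRel PB) ⋙
      Quotient.functor (outerQuotRel PB PC) ⋙ fwd PB PC hBC =
      Quotient.functor (naiveQuotRel PC) := by
    rw [hfwd, hmid]
  have h1 : fwd PB PC hBC ⋙ bwd PB PC = 𝟭 _ := by
    apply CategoryTheory.Quotient.lift_unique'
    apply CategoryTheory.Quotient.lift_unique' (naiveQuotRel PB)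
    calc Quotient.functor (naiveQuotRel PB) ⋙ Quotient.functor (outerQuotRel PB PC) ⋙
          fwd PB PC hBC ⋙ bwd PB PC
        = (Quotient.functor (naiveQuotRel PB) ⋙ Quotient.functor (outerQuotRel PB PC) ⋙
            fwd PB PC hBC) ⋙ bwd PB PC := rfl
      _ = Quotient.functor (naiveQuotRel PC) ⋙ bwd PB PC := by rw [hcomp]
      _ = Quotient.functor (naiveQuotRel PB) ⋙ Quotient.functor (outerQuotRel PB PC) ⋙ 𝟭 _ := by
          rw [hbwd]; rfl
  have h2 : bwd PB PC ⋙ fwd PB PC hBC = 𝟭 _ := by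
    apply CategoryTheory.Quotient.lift_unique' (naiveQuotRel PC)
    calc Quotient.functor (naiveQuotRel PC) ⋙ bwd PB PC ⋙ fwd PB PC hBC
        = (Quotient.functor (naiveQuotRel PC) ⋙ bwd PB PC) ⋙ fwd PB PC hBC := rfl
      _ = (Quotient.functor (naiveQuotRel PB) ⋙ Quotient.functor (outerQuotRel PB PC)) ⋙
            fwd PB PC hBC := by rw [hbwd]
      _ = Quotient.functor (naiveQuotRel PC) ⋙ 𝟭 _ := by
          rw [Functor.assoc, hcomp]; rfl
  refine ⟨⟨fwd PB PC hBC, bwd PB PC, eqToIso h1.symm, eqToIso h2, ?_⟩, ⟨eqToIso hcomp⟩⟩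
  intro X
  simp [eqToIso, eqToHom_map]
end

section
/- Let A be an abelian category with a recollement-type situation: a Serre subcategory A_Γ with exact quotient functor Π : A → A/A_Γ admitting a left adjoint Π^L on derived categories. Suppose T, T' are objects of A such that the adjunction triangle Π^L Π(T) → T → i i^L(T) consists of objects of A (i.e. is a short exact sequence in A), and suppose Ext^1_A(i i^L(T), T') = 0. Then the map Hom_A(T, T') → Hom_{A/A_Γ}(Π T, Π T') induced by Π is surjective, with kernel the set of morphisms T → T' factoring through i i^L(T). -/
open CategoryTheory CategoryTheory.Limits

namespace Stmt5Aux

open CategoryTheory.Abelian DerivedCategory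

universe w'' w''' v''' u'''

variable (C : Type u''') [Category.{v'''} C] [Abelian C] [HasExt.{w'''} C]
  [HasDerivedCategory.{w''} C]

/-- The natural isomorphism `singleFunctor C 0 ⋙ homologyFunctor C 0 ≅ 𝟭 C`. -/
noncomputable def ε : singleFunctor C 0 ⋙ homologyFunctor C 0 ≅ 𝟭 C :=
  Functor.isoWhiskerRight ((SingleFunctors.evaluation C (DerivedCategory C) (0 : ℤ)).mapIso
      (singleFunctorsPostcompQIso C)) (homologyFunctor C 0) ≪≫
    Functor.associator _ _ _ ≪≫
    Functor.isoWhiskerLeft (CochainComplex.singleFunctor C 0) (homologyFunctorFactors C 0) ≪≫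
    HomologicalComplex.homologyFunctorSingleIso C (ComplexShape.up ℤ) 0

variable {C}

lemma homEquiv_symm_comp {D : Type*} [Category D] [HasShift D ℤ] {X Y Z : D}
    (a : X ⟶ Y) (m₀ : ℤ) (hm₀ : m₀ = 0) (x : ShiftedHom Y Z m₀) :
    (ShiftedHom.homEquiv (C := D) m₀ hm₀).symm ((a ≫ x : X ⟶ _) : ShiftedHom X Z _) =
      a ≫ (ShiftedHom.homEquiv m₀ hm₀).symm x := by
  dsimp [ShiftedHom.homEquiv]
  rw [Category.assoc]

lemma homEquiv_symm_mk₀ {D : Type*} [Category D] [HasShift D ℤ] {X Y : D}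
    (g : X ⟶ Y) (m₀ : ℤ) (hm₀ hm₀' : m₀ = 0) :
    (ShiftedHom.homEquiv (C := D) m₀ hm₀).symm (ShiftedHom.mk₀ m₀ hm₀' g) = g := by
  dsimp [ShiftedHom.homEquiv, ShiftedHom.mk₀]
  exact (ShiftedHom.homEquiv m₀ hm₀).symm_apply_apply g

/-- Retraction of `Ext.mk₀` given by taking 0-th homology. -/
noncomputable def μ {X Y : C} (α : Ext X Y 0) : X ⟶ Y :=
  (ε C).inv.app X ≫
    (homologyFunctor C 0).map
      ((ShiftedHom.homEquiv (C := DerivedCategory C) ((0 : ℕ) : ℤ) (by simp)).symm α.hom) ≫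
    (ε C).hom.app Y

lemma μ_mk₀ {X Y : C} (f : X ⟶ Y) : μ (Ext.mk₀ f) = f := by
  dsimp [μ]
  rw [Ext.mk₀_hom]
  erw [homEquiv_symm_mk₀]
  rw [← Functor.comp_map (singleFunctor C 0) (homologyFunctor C 0)]
  rw [(ε C).hom.naturality f]
  simp

lemma μ_mk₀_comp {X Y Z : C} (g : X ⟶ Y) (x : Ext Y Z 0) :
    μ ((Ext.mk₀ g).comp x (zero_add 0)) = g ≫ μ x := by
  dsimp [μ]
  rw [Ext.comp_hom, Ext.mk₀_hom, ShiftedHom.mk₀_comp, homEquiv_symm_comp, Functor.map_comp,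
    ← Functor.comp_map (singleFunctor C 0) (homologyFunctor C 0), Category.assoc,
    ← NatTrans.naturality_assoc (ε C).inv g]
  simp

end Stmt5Aux

/-- Let `A` be abelian, `Π : A ⥤ Q` an exact (Serre) quotient functor,
and suppose the adjunction triangle `Π^L Π(T) → T → i i^L(T)` is a short exact sequence
in `A`: we write `TL = Π^L Π(T)`, `K = i i^L(T)`, `ι : TL ⟶ T`, `π : T ⟶ K`, so that
`Π K = 0` and the adjunction gives a natural additive bijection
`Hom_A(TL, T') ≃ Hom_Q(Π T, Π T')` sending `ι ≫ f` to `Pi.map f`.  If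
`Ext¹_A(K, T') = 0`, then `Hom_A(T,T') → Hom_Q(ΠT, ΠT')` is surjective, and its kernel
is exactly the set of morphisms `T ⟶ T'` factoring through `K = i i^L(T)`. -/
theorem stmt5 {A : Type u₁} [Category.{v₁} A] [Abelian A] [HasExt.{w} A]
    {Q : Type u₂} [Category.{v₂} Q] [Abelian Q]
    (Pi : A ⥤ Q) [Pi.Additive] [PreservesFiniteLimits Pi] [PreservesFiniteColimits Pi]
    (T T' TL K : A) (ι : TL ⟶ T) (π : T ⟶ K) (w : ι ≫ π = 0)
    (hses : (ShortComplex.mk ι π w).ShortExact)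
    (hK : IsZero (Pi.obj K))
    (e : (TL ⟶ T') ≃+ (Pi.obj T ⟶ Pi.obj T'))
    (he : ∀ f : T ⟶ T', e (ι ≫ f) = Pi.map f)
    (hext : Subsingleton (Abelian.Ext K T' 1)) :
    Function.Surjective (fun f : T ⟶ T' => Pi.map f) ∧
      ∀ f : T ⟶ T', Pi.map f = 0 ↔ ∃ h : K ⟶ T', f = π ≫ h := by
  constructor
  · intro g
    letI := HasDerivedCategory.standard A
    have h1 : hses.extClass.comp (Abelian.Ext.mk₀ (e.symm g)) rfl = 0 :=
      @Subsingleton.elim _ hext _ _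
    obtain ⟨x₂, hx₂⟩ := Abelian.Ext.contravariant_sequence_exact₁ hses T'
      (Abelian.Ext.mk₀ (e.symm g)) rfl h1
    refine ⟨Stmt5Aux.μ x₂, ?_⟩
    have hf : ι ≫ Stmt5Aux.μ x₂ = e.symm g := by
      rw [← Stmt5Aux.μ_mk₀_comp, hx₂, Stmt5Aux.μ_mk₀]
    dsimp only
    rw [← he, hf, e.apply_symm_apply]
  · intro f
    constructor
    · intro hf
      have h0 : ι ≫ f = 0 := by
        apply e.injective
        rw [he, hf, map_zero]
      have := hses.epi_g
      exact ⟨hses.exact.desc f h0, (hses.exact.g_desc f h0).symm⟩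
    · rintro ⟨h, rfl⟩
      rw [← he]
      have h0 : ι ≫ π ≫ h = 0 := by rw [← Category.assoc, w, zero_comp]
      rw [h0, map_zero]
end

section
/- Let C be a k-linear abelian category with finite-length objects, equipped with a collection of 'standard' objects Δ_γ and 'costandard' objects ∇_γ indexed by a poset Ω, satisfying Ext^k(Δ_γ, ∇_ξ) = 0 for all k > 0 and all γ, ξ, and Hom(Δ_γ, ∇_ξ) = 0 for γ ≠ ξ. If X admits a finite filtration with subquotients among the Δ_γ (with shifts), then for each γ, Hom(X, ∇_γ) is a free module over the ring End(∇_γ), provided Hom(Δ_γ, ∇_γ) is a free End(∇_γ)-module. -/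
open CategoryTheory CategoryTheory.Limits

universe w v u

/-- In a preadditive category, `Hom(X, N)` is a module over the endomorphism ring
`End N`, acting by post-composition. -/
instance homEndModule {C : Type u} [Category.{v} C] [Preadditive C] (X N : C) :
    Module (End N) (X ⟶ N) where
  smul g f := f ≫ g
  one_smul f := Category.comp_id f
  mul_smul g h f := by
    show f ≫ (g * h) = (f ≫ h) ≫ g
    rw [End.mul_def, Category.assoc]
  smul_zero g := Limits.zero_comp
  smul_add g f f' := Preadditive.add_comp _ _ _ _ _ _
  add_smul g g' f := Preadditive.comp_add _ _ _ _ _ _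
  zero_smul f := Limits.comp_zero

/-- `X` admits a finite filtration with subquotients satisfying `S`. -/
inductive FiltBy {C : Type u} [Category.{v} C] [Abelian C] (S : C → Prop) : C → Prop
  | of_isZero {X : C} (h : IsZero X) : FiltBy S X
  | ext {X₁ X₂ X₃ : C} (f : X₁ ⟶ X₂) (g : X₂ ⟶ X₃) (w : f ≫ g = 0)
      (hse : (ShortComplex.mk f g w).ShortExact)
      (h1 : FiltBy S X₁) (h3 : S X₃) : FiltBy S X₂

section Aux

open CategoryTheory.Abelian DerivedCategory

variable {C : Type u} [Category.{v} C] [Abelian C]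

/-- The composition `singleFunctor C 0 ⋙ homologyFunctor C 0` is isomorphic to the
identity functor. -/
noncomputable def auxSingleH [HasDerivedCategory.{max u v} C] :
    DerivedCategory.singleFunctor C 0 ⋙ DerivedCategory.homologyFunctor C 0 ≅ 𝟭 C :=
  Functor.isoWhiskerRight ((SingleFunctors.evaluation _ _ (0:ℤ)).mapIso
      (DerivedCategory.singleFunctorsPostcompQIso C)) (DerivedCategory.homologyFunctor C 0) ≪≫
    Functor.associator _ _ _ ≪≫
    Functor.isoWhiskerLeft (CochainComplex.singleFunctor C 0)
      (DerivedCategory.homologyFunctorFactors C 0) ≪≫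
    HomologicalComplex.homologyFunctorSingleIso C (ComplexShape.up ℤ) 0

/-- If `Ext¹(X₃, N) = 0`, any map `X₁ ⟶ N` extends along the admissible mono `f`. -/
lemma aux_surj [HasExt.{w} C] {S : ShortComplex C} (hS : S.ShortExact) (N : C)
    (hvanish : Subsingleton (Abelian.Ext S.X₃ N 1)) (u : S.X₁ ⟶ N) :
    ∃ h : S.X₂ ⟶ N, S.f ≫ h = u := by
  obtain ⟨x₂, hx₂⟩ := Ext.contravariant_sequence_exact₁ hS N (Ext.mk₀ u)
    (n₁ := 1) rfl (Subsingleton.elim _ _)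
  letI := HasDerivedCategory.standard C
  let e := auxSingleH (C := C)
  let Φ : ∀ {A : C}, Abelian.Ext A N 0 → (A ⟶ N) := fun {A} x =>
    e.inv.app A ≫ (DerivedCategory.homologyFunctor C 0).map
      (x.hom ≫ (shiftFunctorZero' (DerivedCategory C) (((0:ℕ):ℤ)) (by simp)).hom.app _) ≫
      e.hom.app N
  have hΦmk : ∀ {A : C} (g : A ⟶ N), Φ (Ext.mk₀ g) = g := by
    intro A g
    have h1 : (Ext.mk₀ g).hom ≫ (shiftFunctorZero' (DerivedCategory C) (((0:ℕ):ℤ))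
        (by simp)).hom.app _ = (DerivedCategory.singleFunctor C 0).map g := by
      rw [Ext.mk₀_hom]
      simp [ShiftedHom.mk₀]
    show e.inv.app A ≫ (DerivedCategory.homologyFunctor C 0).map _ ≫ e.hom.app N = g
    rw [h1]
    have := e.hom.naturality g
    dsimp at this
    rw [this, Iso.inv_hom_id_app_assoc]
  have hΦcomp : ∀ {A B : C} (f : A ⟶ B) (x : Abelian.Ext B N 0),
      Φ ((Ext.mk₀ f).comp x (zero_add 0)) = f ≫ Φ x := by
    intro A B f x
    have h1 : ((Ext.mk₀ f).comp x (zero_add 0)).hom =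
        (DerivedCategory.singleFunctor C 0).map f ≫ x.hom :=
      (Ext.singleFunctor_map_comp_hom f x).symm
    show e.inv.app A ≫ (DerivedCategory.homologyFunctor C 0).map _ ≫ e.hom.app N = f ≫ Φ x
    rw [h1, Category.assoc, Functor.map_comp]
    have := e.inv.naturality f
    dsimp at this
    simp only [← Category.assoc]
    rw [← this]
    simp [Φ]
  exact ⟨Φ x₂, by rw [← hΦcomp, hx₂, hΦmk]⟩

/-- Precomposition as a linear map over `End N`. -/
@[simps]
def precompLinear {X Y N : C} (f : X ⟶ Y) : (Y ⟶ N) →ₗ[End N] (X ⟶ N) where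
  toFun h := f ≫ h
  map_add' _ _ := Preadditive.comp_add _ _ _ _ _ _
  map_smul' _ _ := (Category.assoc _ _ _).symm

lemma aux_free_of_ses {X₁ X₂ X₃ N : C} (f : X₁ ⟶ X₂) (g : X₂ ⟶ X₃) (w : f ≫ g = 0)
    (hse : (ShortComplex.mk f g w).ShortExact)
    (hsurj : ∀ u : X₁ ⟶ N, ∃ h : X₂ ⟶ N, f ≫ h = u)
    (h3 : Module.Free (End N) (X₃ ⟶ N)) (h1 : Module.Free (End N) (X₁ ⟶ N)) :
    Module.Free (End N) (X₂ ⟶ N) := by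
  haveI := h3; haveI := h1
  haveI : Epi g := hse.epi_g
  set R := End N
  let φ : (X₂ ⟶ N) →ₗ[R] (X₁ ⟶ N) := precompLinear f
  let ψ : (X₃ ⟶ N) →ₗ[R] (X₂ ⟶ N) := precompLinear g
  have hφsurj : Function.Surjective φ := fun u => hsurj u
  have hψinj : ∀ a, ψ a = 0 → a = 0 := by
    intro a ha
    rw [← cancel_epi g]
    rw [Limits.comp_zero]; exact ha
  have hexact : ∀ h : X₂ ⟶ N, φ h = 0 → ∃ a, ψ a = h := by
    intro h hh
    obtain ⟨d, hd⟩ := CokernelCofork.IsColimit.desc' hse.gIsCokernel h hh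
    exact ⟨d, hd⟩
  obtain ⟨s, hs⟩ := Module.projective_lifting_property φ LinearMap.id hφsurj
  have hs' : ∀ b, φ (s b) = b := fun b => LinearMap.congr_fun hs b
  let τ : ((X₃ ⟶ N) × (X₁ ⟶ N)) →ₗ[R] (X₂ ⟶ N) :=
    ψ.comp (LinearMap.fst R _ _) + s.comp (LinearMap.snd R _ _)
  have hφψ : ∀ a, φ (ψ a) = 0 := by
    intro a
    show f ≫ g ≫ a = 0
    rw [← Category.assoc, w, Limits.zero_comp]
  have hτ0 : ∀ p, τ p = 0 → p = 0 := by
    intro ⟨a, b⟩ hp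
    have hp' : ψ a + s b = 0 := hp
    have hb : b = 0 := by
      have := congrArg φ hp'
      rw [map_add, hφψ, hs', zero_add, map_zero] at this
      exact this
    rw [hb, map_zero, add_zero] at hp'
    exact Prod.ext (hψinj a hp') hb
  have hτinj : Function.Injective τ := by
    intro p q hpq
    have := hτ0 (p - q) (by rw [map_sub, hpq, sub_self])
    rwa [sub_eq_zero] at this
  have hτsurj : Function.Surjective τ := by
    intro x
    have h0 : φ (x - s (φ x)) = 0 := by rw [map_sub, hs', sub_self]
    obtain ⟨a, ha⟩ := hexact _ h0
    refine ⟨(a, φ x), ?_⟩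
    show ψ a + s (φ x) = x
    rw [ha, sub_add_cancel]
  exact Module.Free.of_equiv (LinearEquiv.ofBijective τ ⟨hτinj, hτsurj⟩)

end Aux

/-- Let `C` be a `k`-linear abelian category equipped with families of
standard objects `Dl γ` and costandard objects `∇ γ` indexed by `Ω`, satisfying
`Ext^n(Dl γ, ∇ ξ) = 0` for all `n > 0` and all `γ, ξ`, and `Hom(Dl γ, ∇ ξ) = 0` for
`γ ≠ ξ`.  If `X` admits a finite filtration with subquotients among the `Dl γ`, then for
each `γ`, `Hom(X, ∇ γ)` is a free `End(∇ γ)`-module, provided `Hom(Dl γ, ∇ γ)` is a free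
`End(∇ γ)`-module. -/
theorem stmt6 {C : Type u} [Category.{v} C] [Abelian C] [HasExt.{w} C]
    {k : Type} [Field k] [Linear k C]
    {Ω : Type} (Dl Nab : Ω → C)
    (hext : ∀ (γ ξ : Ω) (n : ℕ), 0 < n → Subsingleton (Abelian.Ext (Dl γ) (Nab ξ) n))
    (hhom : ∀ γ ξ : Ω, γ ≠ ξ → ∀ f : Dl γ ⟶ Nab ξ, f = 0)
    (γ : Ω) (hfree : Module.Free (End (Nab γ)) (Dl γ ⟶ Nab γ))
    (X : C) (hX : FiltBy (fun Y => ∃ ξ : Ω, Nonempty (Y ≅ Dl ξ)) X) :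
    Module.Free (End (Nab γ)) (X ⟶ Nab γ) := by
  induction hX with
  | of_isZero h =>
    haveI : Subsingleton (_ ⟶ Nab γ) := ⟨fun a b => h.eq_of_src a b⟩
    infer_instance
  | @ext X₁ X₂ X₃ f g w hse h1 h3 ih =>
    obtain ⟨ξ, ⟨e'⟩⟩ := h3
    -- `Hom(X₃, ∇ γ)` is free
    have hfree3 : Module.Free (End (Nab γ)) (X₃ ⟶ Nab γ) := by
      by_cases hξ : ξ = γ
      · subst hξ
        haveI := hfree
        refine Module.Free.of_equiv
          (LinearEquiv.ofLinear (precompLinear e'.hom) (precompLinear e'.inv) ?_ ?_)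
        · apply LinearMap.ext; intro h
          simp [precompLinear]
        · apply LinearMap.ext; intro h
          simp [precompLinear]
      · haveI : Subsingleton (X₃ ⟶ Nab γ) := by
          constructor
          intro a b
          have ha : e'.inv ≫ a = 0 := hhom ξ γ hξ _
          have hb : e'.inv ≫ b = 0 := hhom ξ γ hξ _
          calc a = e'.hom ≫ (e'.inv ≫ a) := by rw [e'.hom_inv_id_assoc]
          _ = e'.hom ≫ (e'.inv ≫ b) := by rw [ha, hb]
          _ = b := by rw [e'.hom_inv_id_assoc]
        infer_instance
    -- `Ext¹(X₃, ∇ γ)` vanishes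
    have hvan : Subsingleton (Abelian.Ext X₃ (Nab γ) 1) := by
      haveI := hext ξ γ 1 one_pos
      constructor
      intro x y
      have hx : (Abelian.Ext.mk₀ e'.hom).comp
          ((Abelian.Ext.mk₀ e'.inv).comp x (zero_add 1)) (zero_add 1) = x := by
        rw [Abelian.Ext.mk₀_comp_mk₀_assoc, e'.hom_inv_id, Abelian.Ext.mk₀_id_comp]
      have hy : (Abelian.Ext.mk₀ e'.hom).comp
          ((Abelian.Ext.mk₀ e'.inv).comp y (zero_add 1)) (zero_add 1) = y := by
        rw [Abelian.Ext.mk₀_comp_mk₀_assoc, e'.hom_inv_id, Abelian.Ext.mk₀_id_comp]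
      rw [← hx, ← hy,
        Subsingleton.elim ((Abelian.Ext.mk₀ e'.inv).comp x (zero_add 1))
          ((Abelian.Ext.mk₀ e'.inv).comp y (zero_add 1))]
    exact aux_free_of_ses f g w hse (aux_surj hse (Nab γ) hvan) hfree3 ih
end

section
/- Let D be a triangulated category with a recollement (D_Z, D, D_U) given by functors i_* : D_Z → D, j^* : D → D_U with the standard adjoints and triangles. Let E, F ∈ D be objects such that Hom^1(i^* E, i^! F) = 0. Then the map j^* : Hom_D(E, F) → Hom_{D_U}(j^* E, j^* F) is surjective, and its kernel consists exactly of the morphisms f : E → F that factor as E → i_* i^* E → i_* i^! F → F. -/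
open CategoryTheory CategoryTheory.Limits CategoryTheory.Pretriangulated

universe v₁ v₂ v₃ u₁ u₂ u₃

/-- Let `(D_Z, D, D_U)` be a recollement of triangulated categories,
with `i_* : D_Z ⥤ D` fully faithful, adjoints `i^* ⊣ i_* ⊣ i^!`, `j_! ⊣ j^* ⊣ j_*`,
`j^* i_* = 0`, and the two adjunction distinguished triangles
`j_! j^* E → E → i_* i^* E → (j_! j^* E)[1]` and
`i_* i^! F → F → j_* j^* F → (i_* i^! F)[1]`.
If `Hom¹(i^* E, i^! F) = 0` then `j^* : Hom(E,F) → Hom(j^*E, j^*F)` is surjective, and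
its kernel consists exactly of the morphisms `f : E ⟶ F` factoring as
`E → i_* i^* E → i_* i^! F → F` (through the unit and counit). -/
theorem stmt12
    {DZ : Type u₁} [Category.{v₁} DZ] [HasZeroObject DZ] [Preadditive DZ]
    [HasShift DZ ℤ] [∀ n : ℤ, (shiftFunctor DZ n).Additive] [Pretriangulated DZ]
    {D : Type u₂} [Category.{v₂} D] [HasZeroObject D] [Preadditive D]
    [HasShift D ℤ] [∀ n : ℤ, (shiftFunctor D n).Additive] [Pretriangulated D]
    {DU : Type u₃} [Category.{v₃} DU] [HasZeroObject DU] [Preadditive DU]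
    [HasShift DU ℤ] [∀ n : ℤ, (shiftFunctor DU n).Additive] [Pretriangulated DU]
    (iIncl : DZ ⥤ D) (iStar iShriek : D ⥤ DZ)
    (jStar : D ⥤ DU) (jLower jUpper : DU ⥤ D)
    [iIncl.Full] [iIncl.Faithful]
    [iIncl.CommShift ℤ] [iIncl.IsTriangulated]
    [iStar.CommShift ℤ] [iStar.IsTriangulated]
    [iShriek.CommShift ℤ] [iShriek.IsTriangulated]
    [jStar.CommShift ℤ] [jStar.IsTriangulated]
    [jLower.CommShift ℤ] [jLower.IsTriangulated]
    [jUpper.CommShift ℤ] [jUpper.IsTriangulated]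
    (adjStar : iStar ⊣ iIncl) (adjShriek : iIncl ⊣ iShriek)
    (adjLower : jLower ⊣ jStar) (adjUpper : jStar ⊣ jUpper)
    (hji : ∀ Z : DZ, IsZero (jStar.obj (iIncl.obj Z)))
    (E F : D)
    (δE : iIncl.obj (iStar.obj E) ⟶ (jLower.obj (jStar.obj E))⟦(1 : ℤ)⟧)
    (htriE : Triangle.mk (adjLower.counit.app E) (adjStar.unit.app E) δE ∈
      distTriang D)
    (δF : jUpper.obj (jStar.obj F) ⟶ (iIncl.obj (iShriek.obj F))⟦(1 : ℤ)⟧)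
    (htriF : Triangle.mk (adjShriek.counit.app F) (adjUpper.unit.app F) δF ∈
      distTriang D)
    (hvan : ∀ φ : iStar.obj E ⟶ (iShriek.obj F)⟦(1 : ℤ)⟧, φ = 0) :
    Function.Surjective (fun f : E ⟶ F => jStar.map f) ∧
      ∀ f : E ⟶ F, jStar.map f = 0 ↔
        ∃ g : iIncl.obj (iStar.obj E) ⟶ iIncl.obj (iShriek.obj F),
          f = adjStar.unit.app E ≫ g ≫ adjShriek.counit.app F := by
  -- key vanishing: any map into iIncl-image from jLower-image is zero
  have hzero : ∀ {Y : DU} {Z : DZ} (m : jLower.obj Y ⟶ iIncl.obj Z), m = 0 := by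
    intro Y Z m
    have h1 : adjLower.homEquiv Y (iIncl.obj Z) m = 0 := (hji Z).eq_of_tgt _ _
    have := (adjLower.homEquiv Y (iIncl.obj Z)).symm_apply_apply m
    rw [h1] at this
    rw [← this]
    simp [Adjunction.homEquiv]
  -- any map E ⟶ (iIncl.obj (iShriek.obj F))⟦1⟧ is zero
  have hvan' : ∀ (ψ : E ⟶ (iIncl.obj (iShriek.obj F))⟦(1 : ℤ)⟧), ψ = 0 := by
    intro ψ
    set e := (iIncl.commShiftIso (1 : ℤ)).app (iShriek.obj F)
    have h1 : adjStar.homEquiv E _ ((adjStar.homEquiv E _).symm (ψ ≫ e.inv)) =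
        adjStar.homEquiv E _ 0 := congrArg _ (hvan _)
    rw [(adjStar.homEquiv E _).apply_symm_apply] at h1
    have h2 : ψ ≫ e.inv = 0 := by
      rw [h1]; simp [Adjunction.homEquiv]
    have := h2 =≫ e.hom
    simpa using this
  constructor
  · intro u
    set φ := adjUpper.homEquiv E (jStar.obj F) u with hφ
    have hφδ : φ ≫ δF = 0 := hvan' _
    obtain ⟨f, hf⟩ := Triangle.coyoneda_exact₃ _ htriF φ hφδ
    refine ⟨f, ?_⟩
    apply (adjUpper.homEquiv E (jStar.obj F)).injective
    have hnat : adjUpper.unit.app E ≫ jUpper.map (jStar.map f) =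
        f ≫ adjUpper.unit.app F := (adjUpper.unit.naturality f).symm
    rw [Adjunction.homEquiv_apply]
    exact hnat.trans hf.symm
  · intro f
    constructor
    · intro hf0
      -- f ≫ unit_F = 0
      have h1 : f ≫ adjUpper.unit.app F = 0 := by
        have hnat : adjUpper.unit.app E ≫ jUpper.map (jStar.map f) =
            f ≫ adjUpper.unit.app F := (adjUpper.unit.naturality f).symm
        rw [← hnat, hf0]
        simp
      obtain ⟨h, hh⟩ := Triangle.coyoneda_exact₂ _ htriF f h1
      -- h : E ⟶ iIncl.obj (iShriek.obj F); mor₁ of triE composed with h is zero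
      have h2 : (Triangle.mk (adjLower.counit.app E) (adjStar.unit.app E) δE).mor₁ ≫ h = 0 :=
        hzero _
      obtain ⟨g, hg⟩ := Triangle.yoneda_exact₂ _ htriE h h2
      exact ⟨g, by rw [hh, hg]; exact Category.assoc _ _ _⟩
    · rintro ⟨g, rfl⟩
      have : jStar.map g = 0 := (hji _).eq_of_src _ _
      simp [this]
end
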